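/- For t ∈ (0,1), 1 - πt·cot(πt) < 2t²/(1-t²) + 3t². -/

import Mathlib

open Real Filter Topology

-- telescoping
lemma telesum : HasSum (fun n : ℕ => (2:ℝ) / ((n+1)*(n+3))) (3/2) := by
  have hnn : ∀ n : ℕ, 0 ≤ (2:ℝ) / ((n+1)*(n+3)) := by
    intro n; positivity
  rw [hasSum_iff_tendsto_nat_of_nonneg hnn]
  have hps : ∀ N : ℕ, ∑ m ∈ Finset.range N, (2:ℝ) / ((m+1)*(m+3))
      = 3/2 - 1/(N+1) - 1/(N+2) := by
    intro N
    induction N with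
    | zero => norm_num
    | succ N ih =>
      rw [Finset.sum_range_succ, ih]
      have h1 : ((N:ℝ)+1) ≠ 0 := by positivity
      have h2 : ((N:ℝ)+2) ≠ 0 := by positivity
      have h3 : ((N:ℝ)+3) ≠ 0 := by positivity
      push_cast
      field_simp
      ring
  simp only [hps]
  have := tendsto_one_div_add_atTop_nhds_zero_nat (𝕜 := ℝ)
  have h2 : Tendsto (fun n : ℕ => 1 / ((n:ℝ) + 2)) atTop (𝓝 0) := by
    have h := this.comp (tendsto_add_atTop_nat 1)
    have : ∀ n : ℕ, ((fun n : ℕ => 1 / ((n:ℝ) + 1)) ∘ fun a => a + 1) n = 1 / ((n:ℝ) + 2) := by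
      intro n; simp [Function.comp]; push_cast; ring_nf
    exact h.congr this
  have := ((tendsto_const_nhds (x := (3:ℝ)/2)).sub this).sub h2
  simpa using this



lemma logsum (z : ℝ) (hz : z ∈ Set.Ioo (0:ℝ) 1) :
    HasSum (fun n : ℕ => Real.log (1 - z^2/((n:ℝ)+1)^2))
      (Real.log (Real.sin (Real.pi * z) / (Real.pi * z))) := by
  obtain ⟨hz0, hz1⟩ := hz
  have hfac : ∀ n : ℕ, (0:ℝ) < 1 - z^2/((n:ℝ)+1)^2 := by
    intro n
    have h1 : z^2 < 1 := by nlinarith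
    have h2 : (1:ℝ) ≤ ((n:ℝ)+1)^2 := by nlinarith [Nat.cast_nonneg (α := ℝ) n]
    have : z^2/((n:ℝ)+1)^2 < 1 := by
      rw [div_lt_one (by positivity)]; linarith
    linarith
  have hπz : (0:ℝ) < Real.pi * z := by positivity
  have hsin : 0 < Real.sin (Real.pi * z) := by
    apply Real.sin_pos_of_pos_of_lt_pi hπz
    nlinarith [Real.pi_pos]
  -- partial products tend to sin(πz)/(πz)
  have hprod := Real.tendsto_euler_sin_prod z
  have hP : Tendsto (fun N : ℕ => ∏ j ∈ Finset.range N, ((1:ℝ) - z^2/((j:ℝ)+1)^2))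
      atTop (𝓝 (Real.sin (Real.pi * z) / (Real.pi * z))) := by
    have := hprod.div_const (Real.pi * z)
    refine this.congr fun N => ?_
    rw [mul_comm (Real.pi * z), mul_div_assoc, div_self hπz.ne', mul_one]
  have hlog : Tendsto (fun N : ℕ => Real.log (∏ j ∈ Finset.range N, ((1:ℝ) - z^2/((j:ℝ)+1)^2)))
      atTop (𝓝 (Real.log (Real.sin (Real.pi * z) / (Real.pi * z)))) :=
    ((Real.continuousAt_log (by positivity)).tendsto).comp hP
  have hps : ∀ N : ℕ, ∑ j ∈ Finset.range N, -Real.log (1 - z^2/((j:ℝ)+1)^2)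
      = -Real.log (∏ j ∈ Finset.range N, ((1:ℝ) - z^2/((j:ℝ)+1)^2)) := by
    intro N
    rw [Real.log_prod fun j _ => (hfac j).ne', Finset.sum_neg_distrib]
  have hnn : ∀ n : ℕ, 0 ≤ -Real.log (1 - z^2/((n:ℝ)+1)^2) := by
    intro n
    have : Real.log (1 - z^2/((n:ℝ)+1)^2) ≤ 0 :=
      Real.log_nonpos (hfac n).le
        (by have := div_nonneg (sq_nonneg z) (sq_nonneg ((n:ℝ)+1)); linarith)
    linarith
  have : HasSum (fun n : ℕ => -Real.log (1 - z^2/((n:ℝ)+1)^2))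
      (-(Real.log (Real.sin (Real.pi * z) / (Real.pi * z)))) := by
    rw [hasSum_iff_tendsto_nat_of_nonneg hnn]
    simp only [hps]
    exact hlog.neg
  simpa using this.neg




lemma cot_expansion (t : ℝ) (ht : t ∈ Set.Ioo (0:ℝ) 1) :
    Real.pi * Real.cot (Real.pi * t) - 1/t
      = ∑' n : ℕ, (-2*t / (((n:ℝ)+1)^2 - t^2)) := by
  obtain ⟨ht0, ht1⟩ := ht
  set b : ℝ := (1+t)/2 with hbdef
  have htb : t < b := by rw [hbdef]; linarith
  have hb1 : b < 1 := by rw [hbdef]; linarith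
  have hb0 : (0:ℝ) < b := by rw [hbdef]; linarith
  set g : ℕ → ℝ → ℝ := fun n y => Real.log (1 - y^2/((n:ℝ)+1)^2) with hg
  set g' : ℕ → ℝ → ℝ := fun n y => -2*y / (((n:ℝ)+1)^2 - y^2) with hg'
  set u : ℕ → ℝ := fun n => (2*b/(1-b^2)) * (1/((n:ℝ)+1)^2) with hu
  have hcast : ∀ n : ℕ, (1:ℝ) ≤ ((n:ℝ)+1)^2 := fun n => by
    nlinarith [Nat.cast_nonneg (α := ℝ) n]
  have hkey : ∀ n : ℕ, ∀ y : ℝ, y ∈ Set.Ioo (-b) b →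
      (1-b^2) * ((n:ℝ)+1)^2 ≤ ((n:ℝ)+1)^2 - y^2 := by
    intro n y hy
    have h1 : y^2 ≤ b^2 := sq_le_sq' hy.1.le hy.2.le
    have h2 : b^2 * 1 ≤ b^2 * ((n:ℝ)+1)^2 := by
      apply mul_le_mul_of_nonneg_left (hcast n) (sq_nonneg b)
    nlinarith
  have hb2 : (0:ℝ) < 1 - b^2 := by nlinarith
  have hpos : ∀ n : ℕ, ∀ y : ℝ, y ∈ Set.Ioo (-b) b → (0:ℝ) < ((n:ℝ)+1)^2 - y^2 := by
    intro n y hy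
    calc (0:ℝ) < (1-b^2) * ((n:ℝ)+1)^2 := by positivity
    _ ≤ _ := hkey n y hy
  have husum : Summable u := by
    apply Summable.mul_left
    have h := summable_one_div_nat_pow (p := 2).mpr one_lt_two
    have := (summable_nat_add_iff 1).mpr h
    refine this.congr fun n => ?_
    push_cast; ring
  have hderiv : ∀ n : ℕ, ∀ y : ℝ, y ∈ Set.Ioo (-b) b → HasDerivAt (g n) (g' n y) y := by
    intro n y hy
    have hne : (1 - y^2/((n:ℝ)+1)^2) ≠ 0 := by
      have h1 := hpos n y hy
      have h2 : (0:ℝ) < ((n:ℝ)+1)^2 := by positivity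
      have : 0 < 1 - y^2/((n:ℝ)+1)^2 := by
        rw [sub_pos, div_lt_one h2]; nlinarith
      exact this.ne'
    have hinner : HasDerivAt (fun y : ℝ => 1 - y^2/((n:ℝ)+1)^2)
        (-(2*y/((n:ℝ)+1)^2)) y := by
      have := ((hasDerivAt_pow 2 y).div_const (((n:ℝ)+1)^2)).const_sub 1
      exact this.congr_deriv (by push_cast; ring)
    have hld := hinner.log hne
    have hdne : (((n:ℝ)+1)^2 - y^2) ≠ 0 := (hpos n y hy).ne'
    have hcne : (((n:ℝ)+1)^2 : ℝ) ≠ 0 := by positivity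
    have heq : -(2*y/((n:ℝ)+1)^2) / (1 - y^2/((n:ℝ)+1)^2)
        = -2*y / (((n:ℝ)+1)^2 - y^2) := by
      rw [div_eq_div_iff hne hdne]
      field_simp
    rw [hg']
    simpa [heq] using hld
  have hbound : ∀ n : ℕ, ∀ y : ℝ, y ∈ Set.Ioo (-b) b → ‖g' n y‖ ≤ u n := by
    intro n y hy
    rw [hg', hu]
    have h1 := hpos n y hy
    have h2 := hkey n y hy
    have hyb : |y| ≤ b := by
      rw [abs_le]; exact ⟨hy.1.le, hy.2.le⟩
    rw [Real.norm_eq_abs, abs_div, abs_of_pos h1]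
    have habs2 : |(-2:ℝ)| = 2 := by norm_num
    have hnum : |(-2)*y| ≤ 2*b := by
      rw [abs_mul, habs2]; linarith
    calc |(-2)*y| / (((n:ℝ)+1)^2 - y^2) ≤ (2*b) / ((1-b^2) * ((n:ℝ)+1)^2) :=
          div_le_div₀ (by positivity) hnum (by positivity) (hkey n y hy)
      _ = (2*b/(1-b^2)) * (1/((n:ℝ)+1)^2) := by
          field_simp
  -- summability at 0
  have hg0 : Summable fun n => g n 0 := by
    have : (fun n : ℕ => g n 0) = fun _ => (0:ℝ) := by
      funext n; simp [hg]
    rw [this]; exact summable_zero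
  have hmem0 : (0:ℝ) ∈ Set.Ioo (-b) b := ⟨by linarith, hb0⟩
  have hmemt : t ∈ Set.Ioo (-b) b := ⟨by linarith, htb⟩
  have hF : HasDerivAt (fun z => ∑' n, g n z) (∑' n, g' n t) t :=
    hasDerivAt_tsum_of_isPreconnected husum isOpen_Ioo (isPreconnected_Ioo)
      hderiv hbound hmem0 hg0 hmemt
  -- F agrees with L near t
  have hFL : (fun z => ∑' n, g n z) =ᶠ[nhds t]
      (fun z => Real.log (Real.sin (Real.pi * z) / (Real.pi * z))) := by
    filter_upwards [isOpen_Ioo.mem_nhds (show t ∈ Set.Ioo (0:ℝ) 1 from ⟨ht0, ht1⟩)] with z hz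
    exact (logsum z hz).tsum_eq
  have hL : HasDerivAt (fun z => Real.log (Real.sin (Real.pi * z) / (Real.pi * z)))
      (∑' n, g' n t) t := hF.congr_of_eventuallyEq hFL.symm
  -- compute the derivative of L directly
  have hsin : 0 < Real.sin (Real.pi * t) := by
    apply Real.sin_pos_of_pos_of_lt_pi (by positivity)
    nlinarith [Real.pi_pos]
  have hπt : (0:ℝ) < Real.pi * t := by positivity
  have hL2 : HasDerivAt (fun z => Real.log (Real.sin (Real.pi * z) / (Real.pi * z)))
      (Real.pi * Real.cot (Real.pi * t) - 1/t) t := by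
    have h1 : HasDerivAt (fun z : ℝ => Real.pi * z) Real.pi t := by
      simpa using (hasDerivAt_id t).const_mul Real.pi
    have hs : HasDerivAt (fun z => Real.sin (Real.pi * z))
        (Real.cos (Real.pi * t) * Real.pi) t := h1.sin
    have hq : HasDerivAt (fun z => Real.sin (Real.pi * z) / (Real.pi * z))
        ((Real.cos (Real.pi * t) * Real.pi * (Real.pi * t)
          - Real.sin (Real.pi * t) * Real.pi) / (Real.pi * t)^2) t := hs.div h1 hπt.ne'
    have := hq.log (by positivity)
    convert this using 1
    rw [Real.cot_eq_cos_div_sin]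
    field_simp
  have := hL2.unique hL
  rw [this, hg']





theorem one_sub_pit_cot_lt (t : ℝ) (ht : t ∈ Set.Ioo (0:ℝ) 1) :
    1 - Real.pi * t * Real.cot (Real.pi * t) < 2 * t ^ 2 / (1 - t ^ 2) + 3 * t ^ 2 := by
  obtain ⟨ht0, ht1⟩ := ht
  have ht2 : t^2 < 1 := by nlinarith
  set f : ℕ → ℝ := fun n => 2*t^2 / (((n:ℝ)+1)^2 - t^2) with hf
  have hcast : ∀ n : ℕ, (1:ℝ) ≤ ((n:ℝ)+1)^2 := fun n => by
    nlinarith [Nat.cast_nonneg (α := ℝ) n]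
  have hkey : ∀ n : ℕ, (1-t^2) * ((n:ℝ)+1)^2 ≤ ((n:ℝ)+1)^2 - t^2 := by
    intro n
    nlinarith [hcast n, sq_nonneg t, mul_le_mul_of_nonneg_left (hcast n) (sq_nonneg t)]
  have hdpos : ∀ n : ℕ, (0:ℝ) < ((n:ℝ)+1)^2 - t^2 := by
    intro n
    calc (0:ℝ) < (1-t^2) * ((n:ℝ)+1)^2 := mul_pos (by linarith) (by positivity)
    _ ≤ _ := hkey n
  have hfnn : ∀ n : ℕ, 0 ≤ f n := fun n => by
    have := hdpos n; rw [hf]; positivity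
  have hmaj : Summable (fun n : ℕ => (2*t^2/(1-t^2)) * (1/((n:ℝ)+1)^2)) := by
    apply Summable.mul_left
    have h := summable_one_div_nat_pow (p := 2).mpr one_lt_two
    have := (summable_nat_add_iff 1).mpr h
    refine this.congr fun n => ?_
    push_cast; ring
  have hle : ∀ n : ℕ, f n ≤ (2*t^2/(1-t^2)) * (1/((n:ℝ)+1)^2) := by
    intro n
    rw [hf]
    calc 2*t^2 / (((n:ℝ)+1)^2 - t^2) ≤ 2*t^2 / ((1-t^2) * ((n:ℝ)+1)^2) := by
          apply div_le_div_of_nonneg_left (by positivity)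
            (mul_pos (by linarith) (by positivity)) (hkey n)
      _ = (2*t^2/(1-t^2)) * (1/((n:ℝ)+1)^2) := by field_simp
  have hsumf : Summable f := Summable.of_nonneg_of_le hfnn hle hmaj
  -- expansion
  have hexp : 1 - Real.pi * t * Real.cot (Real.pi * t) = ∑' n, f n := by
    have h := cot_expansion t ⟨ht0, ht1⟩
    have h2 : 1 - Real.pi * t * Real.cot (Real.pi * t)
        = (-t) * (Real.pi * Real.cot (Real.pi * t) - 1/t) := by
      field_simp; ring
    rw [h2, h, ← tsum_mul_left]
    congr 1; funext n
    rw [hf]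
    have := (hdpos n).ne'
    field_simp
  rw [hexp, Summable.tsum_eq_zero_add hsumf]
  have hf0 : f 0 = 2 * t^2 / (1 - t^2) := by rw [hf]; norm_num
  -- tail bound
  have htail : ∀ n : ℕ, f (n+1) ≤ t^2 * ((2:ℝ) / (((n:ℝ)+1)*((n:ℝ)+3))) := by
    intro n
    show 2*t^2 / ((((n+1:ℕ):ℝ)+1)^2 - t^2) ≤ _
    have h1 : (((n+1:ℕ):ℝ)+1)^2 - t^2 = ((n:ℝ)+2)^2 - t^2 := by push_cast; ring
    rw [h1]
    have h2 : (0:ℝ) < ((n:ℝ)+1)*((n:ℝ)+3) := by positivity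
    have h3 : ((n:ℝ)+1)*((n:ℝ)+3) ≤ ((n:ℝ)+2)^2 - t^2 := by nlinarith
    calc 2*t^2 / (((n:ℝ)+2)^2 - t^2) ≤ 2*t^2 / (((n:ℝ)+1)*((n:ℝ)+3)) :=
          div_le_div_of_nonneg_left (by positivity) h2 h3
      _ = t^2 * ((2:ℝ) / (((n:ℝ)+1)*((n:ℝ)+3))) := by field_simp
  have hsumtel : HasSum (fun n : ℕ => t^2 * ((2:ℝ) / (((n:ℝ)+1)*((n:ℝ)+3)))) (t^2 * (3/2)) :=
    telesum.mul_left _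
  have htailsum : ∑' n, f (n+1) ≤ t^2 * (3/2) := by
    calc ∑' n, f (n+1) ≤ ∑' n : ℕ, t^2 * ((2:ℝ) / (((n:ℝ)+1)*((n:ℝ)+3))) :=
          Summable.tsum_le_tsum htail ((summable_nat_add_iff 1).mpr hsumf) hsumtel.summable
      _ = t^2 * (3/2) := hsumtel.tsum_eq
  rw [hf0]
  have : 0 < t^2 := by positivity
  linarith
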